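/- arXiv:2309.13400 — 7 statements merged into one kernel-verified Lean document; each statement's English description precedes it below -/
import Mathlib

section
/- Let n ≥ 2 be a natural number, let c₁, c₂ be real constants, and let f : ℝ → ℝ be a differentiable function satisfying f'(t) = −f(t) for all t. Define u(η,t) = f(t)·(c₁·log(tanh(η/2)) + c₂)^(1/n) (real power). Then for every η > 0 and every t ∈ ℝ with c₁·log(tanh(η/2)) + c₂ > 0, the function u satisfies the nonlinear diffusion equation ∂u/∂t (η,t) = (1/sinh η)·∂/∂η[ sinh η · ∂/∂η ( u(η,t)ⁿ ) ] − u(η,t), where u(η,t)ⁿ denotes the n-th power of u taken before differentiating in η. -/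
open Real Filter

lemma logtanh_hasDeriv {r : ℝ} (hr : 0 < r) :
    HasDerivAt (fun s : ℝ => Real.log (Real.tanh (s / 2))) (1 / Real.sinh r) r := by
  have h2 : HasDerivAt (fun s : ℝ => s / 2) (1 / 2) r := by
    simpa using (hasDerivAt_id r).div_const 2
  have hsinh : HasDerivAt (fun s : ℝ => Real.sinh (s / 2))
      (Real.cosh (r / 2) * (1 / 2)) r := (Real.hasDerivAt_sinh _).comp r h2
  have hcosh : HasDerivAt (fun s : ℝ => Real.cosh (s / 2))
      (Real.sinh (r / 2) * (1 / 2)) r := (Real.hasDerivAt_cosh _).comp r h2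
  have hs0 : Real.sinh (r / 2) ≠ 0 := ne_of_gt (Real.sinh_pos_iff.2 (by linarith))
  have hc0 : Real.cosh (r / 2) ≠ 0 := ne_of_gt (Real.cosh_pos (r / 2))
  have hlog1 := hsinh.log hs0
  have hlog2 := hcosh.log hc0
  have hmain : HasDerivAt (fun s : ℝ => Real.log (Real.sinh (s / 2)) - Real.log (Real.cosh (s / 2)))
      (Real.cosh (r / 2) * (1 / 2) / Real.sinh (r / 2) -
        Real.sinh (r / 2) * (1 / 2) / Real.cosh (r / 2)) r := hlog1.sub hlog2
  have heq : (fun s : ℝ => Real.log (Real.tanh (s / 2))) =ᶠ[nhds r]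
      (fun s : ℝ => Real.log (Real.sinh (s / 2)) - Real.log (Real.cosh (s / 2))) := by
    filter_upwards [eventually_gt_nhds hr] with s hs
    rw [Real.tanh_eq_sinh_div_cosh,
      Real.log_div (ne_of_gt (Real.sinh_pos_iff.2 (by linarith))) (ne_of_gt (Real.cosh_pos _))]
  have hkey : 1 / Real.sinh r = Real.cosh (r / 2) * (1 / 2) / Real.sinh (r / 2) -
      Real.sinh (r / 2) * (1 / 2) / Real.cosh (r / 2) := by
    have hsr : Real.sinh r = 2 * Real.sinh (r / 2) * Real.cosh (r / 2) := by
      rw [← Real.sinh_two_mul]; ring_nf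
    have hpyth : Real.cosh (r / 2) ^ 2 - Real.sinh (r / 2) ^ 2 = 1 := Real.cosh_sq_sub_sinh_sq _
    rw [hsr]
    field_simp
    linear_combination (-1 : ℝ) * hpyth
  rw [hkey]
  exact hmain.congr_of_eventuallyEq heq

/-- If `f' = -f`, then `u(η,t) = f(t)·(c₁ log(tanh(η/2)) + c₂)^(1/n)` solves
`∂ₜu = Δ_H(uⁿ) - u` wherever `η > 0` and `c₁ log(tanh(η/2)) + c₂ > 0`. -/
theorem stmt_1 (n : ℕ) (hn : 2 ≤ n) (c₁ c₂ : ℝ) (f : ℝ → ℝ)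
    (hf : Differentiable ℝ f) (hf' : ∀ t : ℝ, deriv f t = - f t)
    (u : ℝ → ℝ → ℝ)
    (hu : ∀ η t : ℝ, u η t =
      f t * (c₁ * Real.log (Real.tanh (η / 2)) + c₂) ^ ((1 : ℝ) / n)) :
    ∀ η t : ℝ, 0 < η → 0 < c₁ * Real.log (Real.tanh (η / 2)) + c₂ →
      deriv (fun s : ℝ => u η s) t =
        (1 / Real.sinh η) *
          deriv (fun s : ℝ => Real.sinh s * deriv (fun r : ℝ => (u r t) ^ n) s) η
        - u η t := by
  intro η t hη hpos
  have hn0 : (n : ℝ) ≠ 0 := by positivity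
  set g : ℝ → ℝ := fun r => c₁ * Real.log (Real.tanh (r / 2)) + c₂ with hg
  -- LHS
  have hL : deriv (fun s : ℝ => u η s) t = - u η t := by
    have : (fun s : ℝ => u η s) = fun s => f s * (g η) ^ ((1:ℝ)/n) := by
      funext s; exact hu η s
    rw [this, deriv_mul_const (hf t), hf' t, hu η t]
    ring
  -- continuity of g at η
  have hgcont : ContinuousAt g η := by
    have htpos : 0 < Real.tanh (η / 2) := by
      rw [Real.tanh_eq_sinh_div_cosh]
      exact div_pos (Real.sinh_pos_iff.2 (by linarith)) (Real.cosh_pos _)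
    have htanh : Continuous (fun r : ℝ => Real.tanh (r / 2)) := by
      have : (fun r : ℝ => Real.tanh (r / 2)) = fun r => Real.sinh (r / 2) / Real.cosh (r / 2) := by
        funext r; exact Real.tanh_eq_sinh_div_cosh _
      rw [this]
      exact (Real.continuous_sinh.comp (continuous_id.div_const 2)).div
        (Real.continuous_cosh.comp (continuous_id.div_const 2))
        (fun x => ne_of_gt (Real.cosh_pos _))
    have hlt : ContinuousAt (fun r : ℝ => Real.log (Real.tanh (r / 2))) η :=
      htanh.continuousAt.log (ne_of_gt htpos)
    exact (continuousAt_const.mul hlt).add continuousAt_const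
  have hev : ∀ᶠ r in nhds η, 0 < r ∧ 0 < g r := by
    filter_upwards [eventually_gt_nhds hη, hgcont.eventually (eventually_gt_nhds hpos)] with r h1 h2
    exact ⟨h1, h2⟩
  -- the inner function is eventually constant equal to f t ^ n * c₁
  have hconst : (fun s : ℝ => Real.sinh s * deriv (fun r : ℝ => (u r t) ^ n) s)
      =ᶠ[nhds η] (fun _ => f t ^ n * c₁) := by
    filter_upwards [hev.eventually_nhds] with s hs
    obtain ⟨hs0, hgs⟩ := hs.self_of_nhds
    have hpow : (fun r : ℝ => (u r t) ^ n) =ᶠ[nhds s] (fun r => f t ^ n * g r) := by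
      filter_upwards [hs] with r ⟨hr0, hgr⟩
      rw [hu r t, mul_pow, ← Real.rpow_natCast ((g r) ^ ((1:ℝ)/n)) n,
        ← Real.rpow_mul hgr.le, one_div, inv_mul_cancel₀ hn0, Real.rpow_one]
    have hd : HasDerivAt (fun r => f t ^ n * g r) (f t ^ n * (c₁ * (1 / Real.sinh s))) s :=
      (((logtanh_hasDeriv hs0).const_mul c₁).add_const c₂).const_mul _
    rw [hpow.deriv_eq, hd.deriv]
    have hss : Real.sinh s ≠ 0 := ne_of_gt (Real.sinh_pos_iff.2 hs0)
    field_simp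
  rw [hconst.deriv_eq, deriv_const, hL]
  ring
end

section
/- Let n ≥ 2 be a natural number and let c₁, c₂ be real constants. Define u(η,t) = e^(−t)·(c₁·log(tanh(η/2)) + c₂)^(1/n) (real power). Then for every η > 0 and every t ∈ ℝ with c₁·log(tanh(η/2)) + c₂ > 0, u satisfies the classical nonlinear diffusion equation ∂u/∂t (η,t) = (1/sinh η)·∂/∂η[ sinh η · ∂/∂η ( u(η,t)ⁿ ) ] − u(η,t). -/
open Real Filter

/-- Continuity of the radicand at positive points. -/
lemma aux_contAt_f (c₁ c₂ : ℝ) {s : ℝ} (hs : 0 < s) :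
    ContinuousAt (fun r : ℝ => c₁ * Real.log (Real.tanh (r / 2)) + c₂) s := by
  have ht : Real.tanh (s / 2) ≠ 0 := by
    rw [Real.tanh_eq_sinh_div_cosh]
    exact (div_pos (Real.sinh_pos_iff.2 (by linarith)) (Real.cosh_pos (s / 2))).ne'
  have h1 : Continuous (fun r : ℝ => Real.tanh (r / 2)) := by
    have heq : (fun r : ℝ => Real.tanh (r / 2)) =
        fun r : ℝ => Real.sinh (r / 2) / Real.cosh (r / 2) :=
      funext fun r => Real.tanh_eq_sinh_div_cosh _
    rw [heq]
    exact ((Real.continuous_sinh.comp (continuous_id.div_const 2)).div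
      (Real.continuous_cosh.comp (continuous_id.div_const 2))
      fun x => (Real.cosh_pos _).ne')
  have h2 : ContinuousAt (fun r : ℝ => Real.log (Real.tanh (r / 2))) s :=
    h1.continuousAt.log ht
  exact (h2.const_mul c₁).add continuousAt_const

/-- f(r) = c₁ log tanh(r/2) + c₂ has derivative c₁ / sinh s at s > 0. -/
lemma aux_hasDerivAt_f (c₁ c₂ : ℝ) {s : ℝ} (hs : 0 < s) :
    HasDerivAt (fun r : ℝ => c₁ * Real.log (Real.tanh (r / 2)) + c₂)
      (c₁ / Real.sinh s) s := by
  have hsh : 0 < Real.sinh (s / 2) := Real.sinh_pos_iff.2 (by linarith)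
  have hch : 0 < Real.cosh (s / 2) := Real.cosh_pos (s / 2)
  have hev : (fun r : ℝ => c₁ * Real.log (Real.tanh (r / 2)) + c₂) =ᶠ[nhds s]
      (fun r : ℝ => c₁ * (Real.log (Real.sinh (r / 2)) - Real.log (Real.cosh (r / 2))) + c₂) := by
    filter_upwards [Ioi_mem_nhds hs] with r hr
    have hsr : 0 < Real.sinh (r / 2) :=
      Real.sinh_pos_iff.2 (by have := Set.mem_Ioi.mp hr; linarith)
    rw [Real.tanh_eq_sinh_div_cosh, Real.log_div hsr.ne' (Real.cosh_pos (r / 2)).ne']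
  have h2 : HasDerivAt (fun r : ℝ => r / 2) (1 / 2) s := (hasDerivAt_id s).div_const 2
  have hS : HasDerivAt (fun r : ℝ => Real.sinh (r / 2)) (Real.cosh (s / 2) * (1 / 2)) s :=
    by have := (Real.hasDerivAt_sinh (s / 2)).comp s h2; exact this
  have hC : HasDerivAt (fun r : ℝ => Real.cosh (r / 2)) (Real.sinh (s / 2) * (1 / 2)) s :=
    by have := (Real.hasDerivAt_cosh (s / 2)).comp s h2; exact this
  have hlS : HasDerivAt (fun r : ℝ => Real.log (Real.sinh (r / 2)))
      ((Real.cosh (s / 2) * (1 / 2)) / Real.sinh (s / 2)) s := hS.log hsh.ne'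
  have hlC : HasDerivAt (fun r : ℝ => Real.log (Real.cosh (r / 2)))
      ((Real.sinh (s / 2) * (1 / 2)) / Real.cosh (s / 2)) s := hC.log hch.ne'
  have h := (((hlS.sub hlC).const_mul c₁).add_const c₂)
  have hsinh : Real.sinh s = 2 * Real.sinh (s / 2) * Real.cosh (s / 2) := by
    have := Real.sinh_two_mul (s / 2)
    rw [show 2 * (s / 2) = s by ring] at this
    exact this
  have hsq : Real.cosh (s / 2) ^ 2 - Real.sinh (s / 2) ^ 2 = 1 := Real.cosh_sq_sub_sinh_sq _
  have hd : c₁ * ((Real.cosh (s / 2) * (1 / 2)) / Real.sinh (s / 2) -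
      (Real.sinh (s / 2) * (1 / 2)) / Real.cosh (s / 2)) = c₁ / Real.sinh s := by
    rw [hsinh, div_sub_div _ _ hsh.ne' hch.ne',
      show Real.cosh (s/2) * (1/2) * Real.cosh (s/2) -
        Real.sinh (s/2) * (Real.sinh (s/2) * (1/2)) =
        (Real.cosh (s/2) ^ 2 - Real.sinh (s/2) ^ 2) / 2 by ring, hsq]
    field_simp
  rw [← hd]
  exact h.congr_of_eventuallyEq hev

/-- `u(η,t) = e^{-t}·(c₁ log(tanh(η/2)) + c₂)^(1/n)` solves the classical
nonlinear diffusion equation `∂ₜu = Δ_H(uⁿ) - u` for `η > 0` where the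
radicand is positive. -/
theorem stmt_2 (n : ℕ) (hn : 2 ≤ n) (c₁ c₂ : ℝ)
    (u : ℝ → ℝ → ℝ)
    (hu : ∀ η t : ℝ, u η t =
      Real.exp (-t) * (c₁ * Real.log (Real.tanh (η / 2)) + c₂) ^ ((1 : ℝ) / n)) :
    ∀ η t : ℝ, 0 < η → 0 < c₁ * Real.log (Real.tanh (η / 2)) + c₂ →
      deriv (fun s : ℝ => u η s) t =
        (1 / Real.sinh η) *
          deriv (fun s : ℝ => Real.sinh s * deriv (fun r : ℝ => (u r t) ^ n) s) η
        - u η t := by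
  intro η t hη hpos
  set f : ℝ → ℝ := fun r => c₁ * Real.log (Real.tanh (r / 2)) + c₂ with hf
  have hn0 : (n : ℝ) ≠ 0 := by positivity
  have hC : u η t = Real.exp (-t) * (f η) ^ ((1:ℝ)/n) := hu η t
  have hL : deriv (fun s : ℝ => u η s) t = - u η t := by
    have he : HasDerivAt (fun s : ℝ => Real.exp (-s)) (-Real.exp (-t)) t := by
      simpa [Function.comp_def] using (Real.hasDerivAt_exp (-t)).comp t ((hasDerivAt_id t).neg)
    have h1 : HasDerivAt (fun s : ℝ => Real.exp (-s) * (f η) ^ ((1:ℝ)/n))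
        (-Real.exp (-t) * (f η) ^ ((1:ℝ)/n)) t := he.mul_const _
    have heq : (fun s : ℝ => u η s) = fun s : ℝ => Real.exp (-s) * (f η) ^ ((1:ℝ)/n) := by
      funext s; exact hu η s
    rw [heq, h1.deriv, hC]; ring
  have hevpos : ∀ᶠ r in nhds η, 0 < f r := (aux_contAt_f c₁ c₂ hη) (Ioi_mem_nhds hpos)
  have hevgt : ∀ᶠ r in nhds η, 0 < r := Ioi_mem_nhds hη
  have hinner : ∀ s : ℝ, 0 < s → 0 < f s →
      deriv (fun r : ℝ => (u r t) ^ n) s = Real.exp (-t) ^ n * c₁ / Real.sinh s := by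
    intro s hs hfs
    have hev : (fun r : ℝ => (u r t) ^ n) =ᶠ[nhds s]
        (fun r : ℝ => Real.exp (-t) ^ n * f r) := by
      filter_upwards [(aux_contAt_f c₁ c₂ hs) (Ioi_mem_nhds hfs)] with r hr
      have hr' : 0 < f r := hr
      rw [hu r t, mul_pow, ← Real.rpow_natCast ((f r) ^ ((1:ℝ)/n)) n,
        ← Real.rpow_mul hr'.le, one_div, inv_mul_cancel₀ hn0, Real.rpow_one]
    have hD : HasDerivAt (fun r : ℝ => Real.exp (-t) ^ n * f r)
        (Real.exp (-t) ^ n * (c₁ / Real.sinh s)) s :=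
      (aux_hasDerivAt_f c₁ c₂ hs).const_mul _
    rw [hev.deriv_eq, hD.deriv]; ring
  have hzero : deriv (fun s : ℝ => Real.sinh s * deriv (fun r : ℝ => (u r t) ^ n) s) η = 0 := by
    have hev : (fun s : ℝ => Real.sinh s * deriv (fun r : ℝ => (u r t) ^ n) s) =ᶠ[nhds η]
        (fun _ : ℝ => Real.exp (-t) ^ n * c₁) := by
      filter_upwards [hevpos, hevgt] with s hfs hs
      rw [hinner s hs hfs]
      have hne : Real.sinh s ≠ 0 := (Real.sinh_pos_iff.2 hs).ne'
      field_simp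
    rw [hev.deriv_eq, deriv_const]
  rw [hL, hzero]; ring
end

section
/- Let β ∈ (0,1), let n ≥ 2 be a natural number, and let c₁, c₂ be real constants. Define u(η,t) = E_β(−t^β)·(c₁·log(tanh(η/2)) + c₂)^(1/n), where E_β(x) = Σ_{k=0}^∞ x^k / Γ(βk + 1) is the one-parameter Mittag-Leffler function. Then for every η > 0 and every t > 0 with c₁·log(tanh(η/2)) + c₂ > 0, u satisfies the nonlinear time-fractional diffusion equation (1/Γ(1−β)) · ∫_0^t (t−τ)^(−β) · ∂u/∂τ (η,τ) dτ = (1/sinh η)·∂/∂η[ sinh η · ∂/∂η ( u(η,t)ⁿ ) ] − u(η,t). -/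
open Real MeasureTheory intervalIntegral

lemma ml_summable_aux {β : ℝ} (hβ0 : 0 < β) {x : ℝ} (hx : 0 ≤ x) :
    Summable (fun k : ℕ => ((k : ℝ) + 1) * x ^ k / Real.Gamma (β * k + 1)) := by
  have hΓpos : ∀ k : ℕ, 0 < Real.Gamma (β * k + 1) := fun k =>
    Real.Gamma_pos_of_pos (by positivity)
  set y : ℝ := max 2 ((4 * (x + 1)) ^ β⁻¹) with hy_def
  have hy2 : (2 : ℝ) ≤ y := le_max_left _ _
  have hy1 : (1 : ℝ) ≤ y := by linarith
  have hy0 : (0 : ℝ) < y := by linarith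
  have hyβ : 4 * (x + 1) ≤ y ^ β := by
    have h1 : ((4 * (x + 1)) ^ β⁻¹) ^ β ≤ y ^ β :=
      Real.rpow_le_rpow (by positivity) (le_max_right _ _) hβ0.le
    rwa [← Real.rpow_mul (by positivity), inv_mul_cancel₀ hβ0.ne', Real.rpow_one] at h1
  have hyβ0 : 0 < y ^ β := by positivity
  set C : ℝ := Real.exp y * y with hC_def
  have hC0 : 0 < C := by positivity
  have hbound : ∀ k : ℕ, 1 ≤ β * k →
      ((k : ℝ) + 1) * x ^ k / Real.Gamma (β * k + 1) ≤ C * (((k : ℝ) + 1) * (4⁻¹ : ℝ) ^ k) := by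
    intro k hk
    set m : ℕ := ⌊β * k⌋₊ with hm_def
    have hm1 : 1 ≤ m := Nat.le_floor (by exact_mod_cast hk)
    have hmle : (m : ℝ) ≤ β * k := Nat.floor_le (by positivity)
    have hmgt : β * k - 1 < m := by
      have := Nat.lt_floor_add_one (β * k); linarith
    have hΓm : (m.factorial : ℝ) ≤ Real.Gamma (β * k + 1) := by
      have h1 : Real.Gamma ((m : ℝ) + 1) ≤ Real.Gamma (β * k + 1) := by
        rcases eq_or_lt_of_le (by linarith : (m : ℝ) + 1 ≤ β * k + 1) with h | h
        · rw [h]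
        · exact le_of_lt (Real.Gamma_strictMonoOn_Ici
            (by simp only [Set.mem_Ici]; exact_mod_cast by linarith [hm1] : (m : ℝ) + 1 ∈ Set.Ici 2)
            (by simp only [Set.mem_Ici]; linarith) h)
      rwa [Real.Gamma_nat_eq_factorial] at h1
    have hfac0 : (0 : ℝ) < m.factorial := by exact_mod_cast m.factorial_pos
    have hfac : (y ^ β) ^ k / C ≤ (m.factorial : ℝ) := by
      have h1 : y ^ m / (m.factorial : ℝ) ≤ Real.exp y := Real.pow_div_factorial_le_exp y hy0.le m
      have h2 : (y ^ β) ^ k / y ≤ y ^ m := by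
        have h3 : y ^ (β * k - 1) ≤ y ^ (m : ℝ) :=
          Real.rpow_le_rpow_of_exponent_le hy1 (by linarith)
        rw [Real.rpow_natCast] at h3
        calc (y ^ β) ^ k / y = y ^ (β * k - 1) := by
              rw [← Real.rpow_natCast (y ^ β) k, ← Real.rpow_mul hy0.le,
                Real.rpow_sub hy0, Real.rpow_one]
          _ ≤ y ^ m := h3
      have h4 : (y ^ β) ^ k ≤ C * m.factorial := by
        have h5 := mul_le_mul_of_nonneg_right h2 hy0.le
        rw [div_mul_cancel₀ _ hy0.ne'] at h5
        have h6 : y ^ m ≤ Real.exp y * m.factorial := (div_le_iff₀ hfac0).mp h1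
        calc (y ^ β) ^ k ≤ y ^ m * y := h5
          _ ≤ (Real.exp y * m.factorial) * y := mul_le_mul_of_nonneg_right h6 hy0.le
          _ = C * m.factorial := by rw [hC_def]; ring
      rw [div_le_iff₀ hC0]; linarith [h4]
    -- combine
    have hxk : x ^ k ≤ (y ^ β) ^ k * (4⁻¹ : ℝ) ^ k := by
      rw [← mul_pow]
      apply pow_le_pow_left₀ hx
      rw [mul_comm, ← div_eq_inv_mul]
      rw [le_div_iff₀ (by norm_num : (0:ℝ) < 4)]
      linarith
    have hnum : ((k : ℝ) + 1) * x ^ k ≤ ((k : ℝ) + 1) * ((y ^ β) ^ k * (4⁻¹ : ℝ) ^ k) :=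
      mul_le_mul_of_nonneg_left hxk (by positivity)
    calc ((k : ℝ) + 1) * x ^ k / Real.Gamma (β * k + 1)
        ≤ ((k : ℝ) + 1) * ((y ^ β) ^ k * (4⁻¹ : ℝ) ^ k) / ((y ^ β) ^ k / C) := by
          apply div_le_div₀ (by positivity) hnum (by positivity)
          exact le_trans hfac hΓm
      _ = C * (((k : ℝ) + 1) * (4⁻¹ : ℝ) ^ k) := by
          field_simp
  -- conclude summability
  have hsum : Summable (fun k : ℕ => C * (((k : ℝ) + 1) * (4⁻¹ : ℝ) ^ k)) := by
    apply Summable.mul_left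
    have h1 : Summable (fun k : ℕ => (k : ℝ) * (4⁻¹ : ℝ) ^ k) := by
      simpa using summable_pow_mul_geometric_of_norm_lt_one (R := ℝ) 1
        (r := (4⁻¹ : ℝ)) (by norm_num)
    have h2 : Summable (fun k : ℕ => (4⁻¹ : ℝ) ^ k) :=
      summable_geometric_of_lt_one (by norm_num) (by norm_num)
    simpa [add_mul] using h1.add h2
  apply Summable.of_norm_bounded_eventually_nat hsum
  have hev : ∀ᶠ k : ℕ in Filter.atTop, 1 ≤ β * k := by
    have : Filter.Tendsto (fun k : ℕ => β * k) Filter.atTop Filter.atTop :=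
      Filter.Tendsto.const_mul_atTop hβ0 tendsto_natCast_atTop_atTop
    exact this.eventually_ge_atTop 1
  filter_upwards [hev] with k hk
  rw [Real.norm_eq_abs, abs_of_nonneg (by positivity)]
  exact hbound k hk


lemma ml_summable {β : ℝ} (hβ0 : 0 < β) {x : ℝ} (hx : 0 ≤ x) :
    Summable (fun k : ℕ => x ^ k / Real.Gamma (β * k + 1)) := by
  refine Summable.of_nonneg_of_le (fun k => ?_) (fun k => ?_) (ml_summable_aux hβ0 hx)
  · exact div_nonneg (pow_nonneg hx k) (Real.Gamma_pos_of_pos (by positivity)).le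
  · have hΓ : 0 < Real.Gamma (β * k + 1) := Real.Gamma_pos_of_pos (by positivity)
    gcongr
    nlinarith [pow_nonneg hx k, Nat.cast_nonneg (α := ℝ) k]

lemma ml_hasDerivAt {β : ℝ} (hβ0 : 0 < β) (x : ℝ) :
    HasDerivAt (fun z : ℝ => ∑' k : ℕ, z ^ k / Real.Gamma (β * k + 1))
      (∑' k : ℕ, ((k : ℝ) + 1) * x ^ k / Real.Gamma (β * ((k : ℝ) + 1) + 1)) x := by
  have hΓ : ∀ k : ℕ, 0 < Real.Gamma (β * k + 1) := fun k =>
    Real.Gamma_pos_of_pos (by positivity)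
  set R : ℝ := |x| + 1 with hR_def
  have hR0 : 0 < R := by positivity
  set u : ℕ → ℝ := fun k => (k : ℝ) * R ^ (k - 1) / Real.Gamma (β * k + 1) with hu_def
  have hu : Summable u := by
    refine Summable.of_nonneg_of_le (fun k => ?_) (fun k => ?_)
      (ml_summable_aux hβ0 (x := max R 1) (by positivity))
    · exact div_nonneg (by positivity) (hΓ k).le
    · have h1 : (k : ℝ) * R ^ (k - 1) ≤ ((k : ℝ) + 1) * (max R 1) ^ k := by
        have h2 : R ^ (k - 1) ≤ (max R 1) ^ k := by
          calc R ^ (k - 1) ≤ (max R 1) ^ (k - 1) :=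
                pow_le_pow_left₀ hR0.le (le_max_left _ _) _
            _ ≤ (max R 1) ^ k := pow_le_pow_right₀ (le_max_right _ _) (Nat.sub_le k 1)
        have h3 : (0:ℝ) ≤ (k:ℝ) := Nat.cast_nonneg k
        nlinarith [pow_nonneg (le_trans zero_le_one (le_max_right R 1)) k]
      exact (div_le_div_iff_of_pos_right (hΓ k)).mpr h1
  have hb : ∀ (y : ℝ), |y| ≤ R → ∀ k : ℕ,
      ‖(k : ℝ) * y ^ (k - 1) / Real.Gamma (β * k + 1)‖ ≤ u k := by
    intro y hy k
    rw [norm_div, Real.norm_eq_abs, Real.norm_eq_abs, abs_of_pos (hΓ k), abs_mul, abs_pow,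
      Nat.abs_cast]
    exact (div_le_div_iff_of_pos_right (hΓ k)).mpr
      (mul_le_mul_of_nonneg_left (pow_le_pow_left₀ (abs_nonneg y) hy _) (Nat.cast_nonneg k))
  have key : HasDerivAt (fun z : ℝ => ∑' k : ℕ, z ^ k / Real.Gamma (β * k + 1))
      (∑' k : ℕ, (k : ℝ) * x ^ (k - 1) / Real.Gamma (β * k + 1)) x := by
    refine hasDerivAt_tsum_of_isPreconnected hu (Metric.isOpen_ball)
      (convex_ball (0:ℝ) R).isPreconnected
      (g := fun (k : ℕ) (z : ℝ) => z ^ k / Real.Gamma (β * k + 1))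
      (g' := fun (k : ℕ) (y : ℝ) => (k : ℝ) * y ^ (k - 1) / Real.Gamma (β * k + 1))
      (fun k y _ => ?_) (fun k y hy => ?_)
      (Metric.mem_ball_self hR0) ?_ ?_
    · exact (hasDerivAt_pow k y).div_const _
    · refine hb y ?_ k
      have := Metric.mem_ball.mp hy
      rw [Real.dist_eq, sub_zero] at this
      linarith
    · exact ml_summable hβ0 le_rfl
    · rw [Metric.mem_ball, Real.dist_eq, sub_zero]; linarith [abs_nonneg x]
  convert key using 1
  have hsum' : Summable (fun k : ℕ => (k : ℝ) * x ^ (k - 1) / Real.Gamma (β * k + 1)) :=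
    Summable.of_norm_bounded hu (hb x (by linarith [abs_nonneg x]))
  rw [Summable.tsum_eq_zero_add hsum']
  simp only [Nat.cast_zero, zero_mul, zero_div, zero_add, Nat.add_sub_cancel]
  apply tsum_congr
  intro k
  push_cast
  ring_nf


lemma ml_time_deriv {β : ℝ} (hβ0 : 0 < β) {τ : ℝ} (hτ : 0 < τ) :
    HasDerivAt (fun s : ℝ => ∑' k : ℕ, (-(s ^ β)) ^ k / Real.Gamma (β * k + 1))
      (∑' k : ℕ, ((-1 : ℝ) ^ (k + 1) * (β * ((k : ℝ) + 1)) / Real.Gamma (β * ((k : ℝ) + 1) + 1)) *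
        τ ^ (β * ((k : ℝ) + 1) - 1)) τ := by
  have hin : HasDerivAt (fun s : ℝ => -(s ^ β)) (-(β * τ ^ (β - 1))) τ :=
    (Real.hasDerivAt_rpow_const (Or.inl hτ.ne')).neg
  have hcomp := (ml_hasDerivAt hβ0 (-(τ ^ β))).comp τ hin
  refine hcomp.congr_deriv ?_
  rw [← tsum_mul_right]
  apply tsum_congr
  intro k
  have h1 : (-(τ ^ β)) ^ k = (-1 : ℝ) ^ k * τ ^ (β * k) := by
    rw [neg_pow, ← Real.rpow_natCast (τ ^ β) k, ← Real.rpow_mul hτ.le]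
  have h2 : τ ^ (β * ((k : ℝ) + 1) - 1) = τ ^ (β * k) * τ ^ (β - 1) := by
    rw [← Real.rpow_add hτ]
    congr 1
    ring
  rw [h1, h2]
  ring

lemma real_beta_integral {a b t : ℝ} (ha : 0 < a) (hb : 0 < b) (ht : 0 < t) :
    ∫ τ in (0 : ℝ)..t, τ ^ (a - 1) * (t - τ) ^ (b - 1) =
      Real.Gamma a * Real.Gamma b / Real.Gamma (a + b) * t ^ (a + b - 1) := by
  have hab : (0 : ℝ) < a + b := by linarith
  have hΓab : Real.Gamma (a + b) ≠ 0 := (Real.Gamma_pos_of_pos hab).ne'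
  have h1 : ((∫ τ in (0 : ℝ)..t, τ ^ (a - 1) * (t - τ) ^ (b - 1) : ℝ) : ℂ) =
      ∫ τ in (0 : ℝ)..t, (τ : ℂ) ^ ((a : ℂ) - 1) * ((t : ℂ) - τ) ^ ((b : ℂ) - 1) := by
    rw [← intervalIntegral.integral_ofReal]
    apply intervalIntegral.integral_congr
    intro τ hτ
    rw [Set.uIcc_of_le ht.le] at hτ
    obtain ⟨hτ0, hτt⟩ := hτ
    push_cast
    rw [Complex.ofReal_cpow hτ0, Complex.ofReal_cpow (by linarith : (0:ℝ) ≤ t - τ)]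
    push_cast
    ring
  have h2 : (∫ τ in (0 : ℝ)..t, (τ : ℂ) ^ ((a : ℂ) - 1) * ((t : ℂ) - τ) ^ ((b : ℂ) - 1)) =
      (t : ℂ) ^ ((a : ℂ) + b - 1) * Complex.betaIntegral a b :=
    Complex.betaIntegral_scaled a b ht
  have h3 : Complex.betaIntegral a b =
      Complex.Gamma a * Complex.Gamma b / Complex.Gamma ((a : ℂ) + b) := by
    have := Complex.Gamma_mul_Gamma_eq_betaIntegral
      (by simpa using ha : 0 < (a : ℂ).re) (by simpa using hb : 0 < (b : ℂ).re)
    have hΓ : Complex.Gamma ((a : ℂ) + b) ≠ 0 := by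
      rw [(by push_cast; ring : (a : ℂ) + b = ((a + b : ℝ) : ℂ)), Complex.Gamma_ofReal]
      exact_mod_cast hΓab
    field_simp at this ⊢
    rw [this]
  apply Complex.ofReal_injective
  rw [h1, h2, h3]
  rw [(by push_cast; ring : (a : ℂ) + b = ((a + b : ℝ) : ℂ)), Complex.Gamma_ofReal,
    Complex.Gamma_ofReal, Complex.Gamma_ofReal,
    (show ((a + b : ℝ) : ℂ) - 1 = ((a + b - 1 : ℝ) : ℂ) by push_cast; ring),
    ← Complex.ofReal_cpow ht.le]
  push_cast
  ring


lemma real_beta_integrable {a b t : ℝ} (ha : 0 < a) (hb : 0 < b) (ht : 0 < t) :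
    IntervalIntegrable (fun τ : ℝ => τ ^ (a - 1) * (t - τ) ^ (b - 1))
      MeasureTheory.volume 0 t := by
  have h1 : IntervalIntegrable (fun τ : ℝ => τ ^ (a - 1) * (t - τ) ^ (b - 1))
      MeasureTheory.volume 0 (t / 2) := by
    apply IntervalIntegrable.mul_continuousOn
      (intervalIntegrable_rpow' (by linarith : (-1 : ℝ) < a - 1))
    intro τ hτ
    rw [Set.uIcc_of_le (by linarith)] at hτ
    apply ContinuousAt.continuousWithinAt
    exact (Real.continuousAt_rpow_const (t - τ) (b - 1)
      (Or.inl (by cases hτ; intro h; nlinarith [sub_eq_zero.mp h]))).comp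
      ((continuous_const.sub continuous_id).continuousAt)
  have h2 : IntervalIntegrable (fun τ : ℝ => τ ^ (a - 1) * (t - τ) ^ (b - 1))
      MeasureTheory.volume (t / 2) t := by
    have base : IntervalIntegrable (fun x : ℝ => x ^ (b - 1)) MeasureTheory.volume 0 (t / 2) :=
      intervalIntegrable_rpow' (by linarith)
    have hcomp := base.comp_sub_left t
    rw [sub_zero, (by ring : t - t / 2 = t / 2)] at hcomp
    apply IntervalIntegrable.continuousOn_mul hcomp.symm
    intro τ hτ
    rw [Set.uIcc_of_le (by linarith)] at hτ
    apply ContinuousAt.continuousWithinAt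
    exact Real.continuousAt_rpow_const τ (a - 1)
      (Or.inl (by cases hτ; intro h; nlinarith))
  exact h1.trans h2

lemma caputo_integral {β : ℝ} (hβ0 : 0 < β) (hβ1 : β < 1) {t : ℝ} (ht : 0 < t) :
    (∫ τ in Set.Ioc (0 : ℝ) t, (t - τ) ^ (-β) *
        (∑' k : ℕ, ((-1 : ℝ) ^ (k + 1) * (β * ((k : ℝ) + 1)) /
          Real.Gamma (β * ((k : ℝ) + 1) + 1)) * τ ^ (β * ((k : ℝ) + 1) - 1)))
      = -Real.Gamma (1 - β) * ∑' k : ℕ, (-(t ^ β)) ^ k / Real.Gamma (β * k + 1) := by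
  have hΓ : ∀ k : ℕ, 0 < Real.Gamma (β * k + 1) := fun k =>
    Real.Gamma_pos_of_pos (by positivity)
  have hΓ1β : 0 < Real.Gamma (1 - β) := Real.Gamma_pos_of_pos (by linarith)
  have hak : ∀ k : ℕ, (0 : ℝ) < β * ((k : ℝ) + 1) := fun k => by positivity
  have hΓa : ∀ k : ℕ, 0 < Real.Gamma (β * ((k : ℝ) + 1)) := fun k =>
    Real.Gamma_pos_of_pos (hak k)
  have hΓa1 : ∀ k : ℕ, Real.Gamma (β * ((k : ℝ) + 1) + 1)
      = β * ((k : ℝ) + 1) * Real.Gamma (β * ((k : ℝ) + 1)) := fun k =>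
    Real.Gamma_add_one (hak k).ne'
  set coef : ℕ → ℝ := fun k => (-1 : ℝ) ^ (k + 1) * (β * ((k : ℝ) + 1)) /
    Real.Gamma (β * ((k : ℝ) + 1) + 1) with hcoef_def
  -- value of the basic integral
  have hφint : ∀ k : ℕ, IntervalIntegrable
      (fun τ : ℝ => τ ^ (β * ((k : ℝ) + 1) - 1) * (t - τ) ^ (-β)) MeasureTheory.volume 0 t := by
    intro k
    have := real_beta_integrable (a := β * ((k : ℝ) + 1)) (b := 1 - β) (hak k) (by linarith) ht
    simpa [(by ring : (1 : ℝ) - β - 1 = -β)] using this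
  have hφval : ∀ k : ℕ, (∫ τ in Set.Ioc (0 : ℝ) t, τ ^ (β * ((k : ℝ) + 1) - 1) * (t - τ) ^ (-β))
      = Real.Gamma (β * ((k : ℝ) + 1)) * Real.Gamma (1 - β) / Real.Gamma (β * (k : ℝ) + 1)
        * (t ^ β) ^ k := by
    intro k
    rw [← intervalIntegral.integral_of_le ht.le]
    have h1 := real_beta_integral (a := β * ((k : ℝ) + 1)) (b := 1 - β) (hak k) (by linarith) ht
    rw [(by ring : (1 : ℝ) - β - 1 = -β),
      (by ring : β * ((k : ℝ) + 1) + (1 - β) - 1 = β * (k : ℝ)),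
      (by ring : β * ((k : ℝ) + 1) + (1 - β) = β * (k : ℝ) + 1)] at h1
    rw [h1, ← Real.rpow_natCast (t ^ β) k, ← Real.rpow_mul ht.le]
  -- rewrite integrand as a tsum
  have hrw : ∀ τ : ℝ, (t - τ) ^ (-β) * (∑' k : ℕ, coef k * τ ^ (β * ((k : ℝ) + 1) - 1))
      = ∑' k : ℕ, coef k * (τ ^ (β * ((k : ℝ) + 1) - 1) * (t - τ) ^ (-β)) := by
    intro τ
    rw [← tsum_mul_left]
    exact tsum_congr fun k => by ring
  rw [MeasureTheory.integral_congr_ae (Filter.Eventually.of_forall hrw)]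
  -- swap sum and integral
  rw [MeasureTheory.integral_tsum]
  · -- evaluate each term and sum
    have hterm : ∀ k : ℕ, (∫ τ in Set.Ioc (0 : ℝ) t,
        coef k * (τ ^ (β * ((k : ℝ) + 1) - 1) * (t - τ) ^ (-β)))
        = (-Real.Gamma (1 - β)) * ((-(t ^ β)) ^ k / Real.Gamma (β * (k : ℝ) + 1)) := by
      intro k
      rw [MeasureTheory.integral_const_mul, hφval k, hcoef_def]
      simp only
      rw [hΓa1 k, neg_pow (t ^ β) k]
      field_simp
      ring
    calc (∑' k : ℕ, ∫ τ in Set.Ioc (0 : ℝ) t,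
          coef k * (τ ^ (β * ((k : ℝ) + 1) - 1) * (t - τ) ^ (-β)))
        = ∑' k : ℕ, (-Real.Gamma (1 - β)) * ((-(t ^ β)) ^ k / Real.Gamma (β * (k : ℝ) + 1)) :=
          tsum_congr hterm
      _ = -Real.Gamma (1 - β) * ∑' k : ℕ, (-(t ^ β)) ^ k / Real.Gamma (β * k + 1) :=
          tsum_mul_left
  · -- a.e.-strong measurability
    intro k
    rw [← Measure.restrict_congr_set MeasureTheory.Ioo_ae_eq_Ioc]
    refine ContinuousOn.aestronglyMeasurable ?_ measurableSet_Ioo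
    intro τ hτ
    obtain ⟨hτ0, hτt⟩ := hτ
    apply ContinuousAt.continuousWithinAt
    apply ContinuousAt.mul continuousAt_const
    apply ContinuousAt.mul
    · exact Real.continuousAt_rpow_const τ _ (Or.inl hτ0.ne')
    · exact (Real.continuousAt_rpow_const (t - τ) _ (Or.inl (by intro h; nlinarith [sub_eq_zero.mp h]))).comp
        ((continuous_const.sub continuous_id).continuousAt)
  · -- finiteness of the sum of lintegrals
    have hIk : ∀ k : ℕ, MeasureTheory.Integrable
        (fun τ : ℝ => coef k * (τ ^ (β * ((k : ℝ) + 1) - 1) * (t - τ) ^ (-β)))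
        (MeasureTheory.volume.restrict (Set.Ioc (0 : ℝ) t)) := by
      intro k
      exact (((hφint k).1).const_mul (coef k))
    have hnorm : ∀ k : ℕ, (∫ τ in Set.Ioc (0 : ℝ) t,
        ‖coef k * (τ ^ (β * ((k : ℝ) + 1) - 1) * (t - τ) ^ (-β))‖)
        = Real.Gamma (1 - β) * ((t ^ β) ^ k / Real.Gamma (β * (k : ℝ) + 1)) := by
      intro k
      have habs : ∀ τ ∈ Set.Ioc (0 : ℝ) t,
          ‖coef k * (τ ^ (β * ((k : ℝ) + 1) - 1) * (t - τ) ^ (-β))‖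
          = (β * ((k : ℝ) + 1) / Real.Gamma (β * ((k : ℝ) + 1) + 1)) *
            (τ ^ (β * ((k : ℝ) + 1) - 1) * (t - τ) ^ (-β)) := by
        intro τ hτ
        obtain ⟨hτ0, hτt⟩ := hτ
        rw [Real.norm_eq_abs, abs_mul, hcoef_def]
        simp only
        rw [abs_div, abs_mul, abs_pow, abs_neg, abs_one, one_pow, one_mul,
          abs_of_pos (hak k), abs_of_pos (Real.Gamma_pos_of_pos (by positivity : (0:ℝ) < β * ((k : ℝ) + 1) + 1)),
          abs_of_nonneg (mul_nonneg (Real.rpow_nonneg hτ0.le _) (Real.rpow_nonneg (by linarith) _))]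
      rw [MeasureTheory.setIntegral_congr_fun measurableSet_Ioc habs,
        MeasureTheory.integral_const_mul, hφval k, hΓa1 k]
      field_simp
    calc (∑' k : ℕ, ∫⁻ τ, ‖coef k * (τ ^ (β * ((k : ℝ) + 1) - 1) * (t - τ) ^ (-β))‖₊
          ∂(MeasureTheory.volume.restrict (Set.Ioc (0 : ℝ) t)))
        = ∑' k : ℕ, ENNReal.ofReal (Real.Gamma (1 - β) *
            ((t ^ β) ^ k / Real.Gamma (β * (k : ℝ) + 1))) := by
          apply tsum_congr
          intro k
          exact (MeasureTheory.ofReal_integral_norm_eq_lintegral_enorm (hIk k)).symm.trans (by rw [hnorm k])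
      _ ≠ ⊤ := by
          rw [← ENNReal.ofReal_tsum_of_nonneg]
          · exact ENNReal.ofReal_ne_top
          · intro k
            exact mul_nonneg hΓ1β.le (div_nonneg (pow_nonneg (Real.rpow_nonneg ht.le _) _) (hΓ k).le)
          · exact (ml_summable hβ0 (Real.rpow_nonneg ht.le β)).mul_left _

set_option maxHeartbeats 1000000 in
/-- `u(η,t) = E_β(-t^β)·(c₁ log(tanh(η/2)) + c₂)^(1/n)` solves the nonlinear
time-fractional diffusion equation `∂_t^β u = Δ_H(uⁿ) - u` (Caputo derivative)
for `η > 0`, `t > 0`, where the radicand is positive. -/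
theorem stmt_4 (β : ℝ) (hβ : β ∈ Set.Ioo (0 : ℝ) 1) (n : ℕ) (hn : 2 ≤ n)
    (c₁ c₂ : ℝ)
    (E : ℝ → ℝ) (hE : ∀ x : ℝ, E x = ∑' k : ℕ, x ^ k / Real.Gamma (β * k + 1))
    (u : ℝ → ℝ → ℝ)
    (hu : ∀ η t : ℝ, u η t =
      E (-(t ^ β)) * (c₁ * Real.log (Real.tanh (η / 2)) + c₂) ^ ((1 : ℝ) / n)) :
    ∀ η t : ℝ, 0 < η → 0 < t → 0 < c₁ * Real.log (Real.tanh (η / 2)) + c₂ →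
      (1 / Real.Gamma (1 - β)) *
        ∫ τ in (0 : ℝ)..t, (t - τ) ^ (-β) * deriv (fun s : ℝ => u η s) τ
      = (1 / Real.sinh η) *
          deriv (fun s : ℝ => Real.sinh s * deriv (fun r : ℝ => (u r t) ^ n) s) η
        - u η t := by
  obtain ⟨hβ0, hβ1⟩ := hβ
  intro η t hη ht hW
  have hn0 : (n : ℝ) ≠ 0 := Nat.cast_ne_zero.mpr (by omega)
  have hΓ1β : 0 < Real.Gamma (1 - β) := Real.Gamma_pos_of_pos (by linarith)
  set W : ℝ → ℝ := fun s => c₁ * Real.log (Real.tanh (s / 2)) + c₂ with hW_def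
  set K : ℝ := W η ^ ((1 : ℝ) / n) with hK_def
  -- ### The time-fractional side
  have hLHS : (1 / Real.Gamma (1 - β)) *
      ∫ τ in (0 : ℝ)..t, (t - τ) ^ (-β) * deriv (fun s : ℝ => u η s) τ = -u η t := by
    have hfun : (fun s : ℝ => u η s) =
        fun s => (∑' k : ℕ, (-(s ^ β)) ^ k / Real.Gamma (β * k + 1)) * K := by
      funext s; rw [hu, hE]
    have hcong : ∀ τ ∈ Set.Ioc (0 : ℝ) t,
        (t - τ) ^ (-β) * deriv (fun s : ℝ => u η s) τ =
        ((t - τ) ^ (-β) * (∑' k : ℕ, ((-1 : ℝ) ^ (k + 1) * (β * ((k : ℝ) + 1)) /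
          Real.Gamma (β * ((k : ℝ) + 1) + 1)) * τ ^ (β * ((k : ℝ) + 1) - 1))) * K := by
      intro τ hτ
      have hd : deriv (fun s : ℝ => u η s) τ =
          (∑' k : ℕ, ((-1 : ℝ) ^ (k + 1) * (β * ((k : ℝ) + 1)) /
            Real.Gamma (β * ((k : ℝ) + 1) + 1)) * τ ^ (β * ((k : ℝ) + 1) - 1)) * K := by
        rw [hfun]
        exact ((ml_time_deriv hβ0 hτ.1).mul_const K).deriv
      rw [hd]; ring
    rw [intervalIntegral.integral_of_le ht.le,
      MeasureTheory.setIntegral_congr_fun measurableSet_Ioc hcong,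
      MeasureTheory.integral_mul_const, caputo_integral hβ0 hβ1 ht, hu, hE]
    field_simp
    ring
  -- ### The spatial side
  have hRHS : deriv (fun s : ℝ => Real.sinh s * deriv (fun r : ℝ => (u r t) ^ n) s) η = 0 := by
    set A : ℝ := E (-(t ^ β)) ^ n with hA_def
    have htanh_pos : ∀ s : ℝ, 0 < s → 0 < Real.tanh (s / 2) := by
      intro s hs
      rw [Real.tanh_eq_sinh_div_cosh]
      exact div_pos (Real.sinh_pos_iff.mpr (by linarith)) (Real.cosh_pos _)
    have hWd : ∀ s : ℝ, 0 < s → HasDerivAt W (c₁ / Real.sinh s) s := by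
      intro s hs0
      have hs2 : 0 < s / 2 := by linarith
      have hcosh : Real.cosh (s / 2) ≠ 0 := (Real.cosh_pos _).ne'
      have hsinh2 : 0 < Real.sinh (s / 2) := Real.sinh_pos_iff.mpr hs2
      have htp : 0 < Real.tanh (s / 2) := htanh_pos s hs0
      have hsinh_s : Real.sinh s = 2 * Real.sinh (s / 2) * Real.cosh (s / 2) := by
        rw [← Real.sinh_two_mul]; congr 1; ring
      have h2 : HasDerivAt (fun x : ℝ => x / 2) (1 / 2 : ℝ) s := (hasDerivAt_id s).div_const 2
      have htanh : HasDerivAt Real.tanh (1 / Real.cosh (s / 2) ^ 2) (s / 2) := by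
        have hdiv := (Real.hasDerivAt_sinh (s / 2)).div (Real.hasDerivAt_cosh (s / 2)) hcosh
        rw [show (Real.sinh / Real.cosh) = Real.tanh from
          funext fun x => (Real.tanh_eq_sinh_div_cosh x).symm] at hdiv
        refine hdiv.congr_deriv ?_
        have hsq := Real.cosh_sq_sub_sinh_sq (s / 2)
        field_simp
        nlinarith [hsq]
      have hlog : HasDerivAt Real.log (Real.tanh (s / 2))⁻¹ (Real.tanh (s / 2)) :=
        Real.hasDerivAt_log htp.ne'
      have hchain := ((hlog.comp (s / 2) htanh).comp s h2).const_mul c₁ |>.add_const c₂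
      refine hchain.congr_deriv ?_
      rw [Real.tanh_eq_sinh_div_cosh]
      rw [hsinh_s]
      field_simp
    set S : Set ℝ := {s : ℝ | 0 < s ∧ 0 < W s} with hS_def
    have hS : IsOpen S := by
      have hWc : ContinuousOn W (Set.Ioi 0) := fun s hs =>
        ((hWd s hs).continuousAt).continuousWithinAt
      have : S = Set.Ioi 0 ∩ W ⁻¹' Set.Ioi 0 := by
        ext s; simp [hS_def, Set.mem_setOf_eq]
      rw [this]
      exact hWc.isOpen_inter_preimage isOpen_Ioi isOpen_Ioi
    have hmem : η ∈ S := ⟨hη, hW⟩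
    have hevI : ∀ s ∈ S, Real.sinh s * deriv (fun r : ℝ => (u r t) ^ n) s = A * c₁ := by
      intro s hs
      obtain ⟨hs0, hsW⟩ := hs
      have hsinh_pos : 0 < Real.sinh s := Real.sinh_pos_iff.mpr hs0
      have hW' : HasDerivAt W (c₁ / Real.sinh s) s := hWd s hs0
      -- local form of u^n
      have hev2 : (fun r : ℝ => (u r t) ^ n) =ᶠ[nhds s] fun r => A * W r := by
        filter_upwards [hS.mem_nhds ⟨hs0, hsW⟩] with r hr
        obtain ⟨hr0, hrW⟩ := hr
        rw [hu, mul_pow, hA_def]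
        congr 1
        rw [← Real.rpow_natCast ((W r) ^ ((1 : ℝ) / n)) n, ← Real.rpow_mul hrW.le,
          one_div, inv_mul_cancel₀ hn0, Real.rpow_one]
      have hderiv2 : deriv (fun r : ℝ => (u r t) ^ n) s = A * (c₁ / Real.sinh s) := by
        rw [Filter.EventuallyEq.deriv_eq hev2]
        exact (hW'.const_mul A).deriv
      rw [hderiv2]
      field_simp
    have hev : (fun s : ℝ => Real.sinh s * deriv (fun r : ℝ => (u r t) ^ n) s)
        =ᶠ[nhds η] fun _ => A * c₁ := by
      filter_upwards [hS.mem_nhds hmem] with s hs using hevI s hs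
    rw [Filter.EventuallyEq.deriv_eq hev, deriv_const]
  rw [hLHS, hRHS]
  ring
end

section
/- Let n ≥ 2 be a natural number, let c₁, c₂ be real constants, and let f : ℝ → ℝ be a twice-differentiable function satisfying the Laguerre eigenvalue equation d/dt[ t · f'(t) ] = −f(t) for all t. Define u(η,t) = f(t)·(c₁·log(tanh(η/2)) + c₂)^(1/n) (real power). Then for every η > 0 and every t ∈ ℝ with c₁·log(tanh(η/2)) + c₂ > 0, u satisfies the Laguerre-type nonlinear diffusion equation ∂/∂t[ t · ∂u/∂t (η,t) ] = (1/sinh η)·∂/∂η[ sinh η · ∂/∂η ( u(η,t)ⁿ ) ] − u(η,t). -/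
open Real Filter Topology

/-- The spatial profile. -/
noncomputable def gprof (c₁ c₂ s : ℝ) : ℝ := c₁ * Real.log (Real.tanh (s / 2)) + c₂

lemma gprof_hasDerivAt (c₁ c₂ : ℝ) {s : ℝ} (hs : 0 < s) :
    HasDerivAt (gprof c₁ c₂) (c₁ / Real.sinh s) s := by
  have hs2 : 0 < s / 2 := by linarith
  have hcosh : Real.cosh (s / 2) ≠ 0 := (Real.cosh_pos (s/2)).ne'
  have hsinh : 0 < Real.sinh (s / 2) := Real.sinh_pos_iff.2 hs2
  have h1 : HasDerivAt (fun r : ℝ => Real.sinh (r / 2)) (Real.cosh (s / 2) * (1 / 2)) s := by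
    have := (Real.hasDerivAt_sinh (s / 2)).comp s ((hasDerivAt_id s).div_const 2)
    exact this
  have h2 : HasDerivAt (fun r : ℝ => Real.cosh (r / 2)) (Real.sinh (s / 2) * (1 / 2)) s := by
    have := (Real.hasDerivAt_cosh (s / 2)).comp s ((hasDerivAt_id s).div_const 2)
    exact this
  have htanh : HasDerivAt (fun r : ℝ => Real.tanh (r / 2))
      ((Real.cosh (s / 2) * (1 / 2) * Real.cosh (s / 2)
        - Real.sinh (s / 2) * (Real.sinh (s / 2) * (1 / 2))) / Real.cosh (s / 2) ^ 2) s := by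
    have := h1.div h2 hcosh
    refine this.congr_of_eventuallyEq ?_
    filter_upwards with r
    rw [Real.tanh_eq_sinh_div_cosh]; rfl
  have htanhpos : 0 < Real.tanh (s / 2) := by
    rw [Real.tanh_eq_sinh_div_cosh]
    exact div_pos hsinh (Real.cosh_pos _)
  have hlog := htanh.log (ne_of_gt htanhpos)
  have := (hlog.const_mul c₁).add_const c₂
  refine this.congr_deriv ?_
  rw [Real.tanh_eq_sinh_div_cosh]
  have hsinhs : Real.sinh s = 2 * Real.sinh (s / 2) * Real.cosh (s / 2) := by
    have : s = 2 * (s / 2) := by ring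
    rw [this, Real.sinh_two_mul]; ring
  have hid : Real.cosh (s / 2) ^ 2 - Real.sinh (s / 2) ^ 2 = 1 := Real.cosh_sq_sub_sinh_sq _
  have hsinhs_ne : Real.sinh s ≠ 0 := by
    rw [hsinhs]; positivity
  field_simp [hsinhs]
  linear_combination (c₁ * Real.sinh s) * hid + c₁ * hsinhs

/-- If `f` is twice differentiable and satisfies the Laguerre eigenvalue
equation `(t f')' = -f`, then `u(η,t) = f(t)·(c₁ log(tanh(η/2)) + c₂)^(1/n)`
solves the Laguerre-type nonlinear diffusion equation
`∂_t(t ∂_t u) = Δ_H(uⁿ) - u` for `η > 0` where the radicand is positive. -/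
theorem stmt_6 (n : ℕ) (hn : 2 ≤ n) (c₁ c₂ : ℝ) (f : ℝ → ℝ)
    (hf : Differentiable ℝ f) (hf' : Differentiable ℝ (deriv f))
    (hlag : ∀ t : ℝ, deriv (fun s : ℝ => s * deriv f s) t = - f t)
    (u : ℝ → ℝ → ℝ)
    (hu : ∀ η t : ℝ, u η t =
      f t * (c₁ * Real.log (Real.tanh (η / 2)) + c₂) ^ ((1 : ℝ) / n)) :
    ∀ η t : ℝ, 0 < η → 0 < c₁ * Real.log (Real.tanh (η / 2)) + c₂ →
      deriv (fun s : ℝ => s * deriv (fun r : ℝ => u η r) s) t =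
        (1 / Real.sinh η) *
          deriv (fun s : ℝ => Real.sinh s * deriv (fun r : ℝ => (u r t) ^ n) s) η
        - u η t := by
  intro η t hη hg
  have hn0 : (n : ℝ) ≠ 0 := by positivity
  set C : ℝ := (c₁ * Real.log (Real.tanh (η / 2)) + c₂) ^ ((1 : ℝ) / n) with hC
  have hgη : 0 < gprof c₁ c₂ η := hg
  -- LHS
  have hLHS : deriv (fun s : ℝ => s * deriv (fun r : ℝ => u η r) s) t = - f t * C := by
    have heq : (fun s : ℝ => s * deriv (fun r : ℝ => u η r) s)
        = fun s : ℝ => (s * deriv f s) * C := by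
      funext s
      have : deriv (fun r : ℝ => u η r) s = deriv f s * C := by
        have : (fun r : ℝ => u η r) = fun r : ℝ => f r * C := by
          funext r; rw [hu]
        rw [this, deriv_mul_const (hf.differentiableAt)]
      rw [this]; ring
    rw [heq, deriv_mul_const (differentiableAt_fun_id.fun_mul (hf' t)), hlag]
  -- eventual positivity of gprof near η
  have hgc : ContinuousAt (gprof c₁ c₂) η := (gprof_hasDerivAt c₁ c₂ hη).continuousAt
  have hev : ∀ᶠ s in 𝓝 η, 0 < s ∧ 0 < gprof c₁ c₂ s := by
    filter_upwards [hgc.eventually (eventually_gt_nhds hgη), eventually_gt_nhds hη]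
      with s h1 h2 using ⟨h2, h1⟩
  -- pow identity
  have hpow : ∀ s : ℝ, 0 < gprof c₁ c₂ s → (u s t) ^ n = f t ^ n * gprof c₁ c₂ s := by
    intro s hgs
    rw [hu, mul_pow]
    congr 1
    show ((gprof c₁ c₂ s) ^ ((1:ℝ)/n)) ^ n = gprof c₁ c₂ s
    rw [← Real.rpow_natCast ((gprof c₁ c₂ s) ^ ((1:ℝ)/n)) n,
      ← Real.rpow_mul (le_of_lt hgs), one_div, inv_mul_cancel₀ hn0, Real.rpow_one]
  -- inner function is eventually constant
  have hconst : ∀ᶠ s in 𝓝 η,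
      Real.sinh s * deriv (fun r : ℝ => (u r t) ^ n) s = f t ^ n * c₁ := by
    filter_upwards [hev, eventually_eventually_nhds.2 hev] with s hs hsev
    obtain ⟨hspos, hgs⟩ := hs
    have hd : deriv (fun r : ℝ => (u r t) ^ n) s = f t ^ n * (c₁ / Real.sinh s) := by
      have hloc : (fun r : ℝ => (u r t) ^ n) =ᶠ[𝓝 s]
          fun r : ℝ => f t ^ n * gprof c₁ c₂ r := by
        filter_upwards [hsev] with r hr using hpow r hr.2
      rw [hloc.deriv_eq, ((gprof_hasDerivAt c₁ c₂ hspos).const_mul (f t ^ n)).deriv]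
    rw [hd]
    have hsne : Real.sinh s ≠ 0 := ne_of_gt (Real.sinh_pos_iff.2 hspos)
    field_simp
  have hRHS : deriv (fun s : ℝ => Real.sinh s * deriv (fun r : ℝ => (u r t) ^ n) s) η = 0 := by
    have heq : (fun s : ℝ => Real.sinh s * deriv (fun r : ℝ => (u r t) ^ n) s)
        =ᶠ[𝓝 η] (fun _ => f t ^ n * c₁) := hconst
    rw [heq.deriv_eq, deriv_const]
  rw [hLHS, hRHS, hu]
  ring
end

section
/- Let n ≥ 2 be a natural number, let ω, α be real constants with α ≠ 0, and let c₁, c₂ be real constants. Define the complex-valued function u(η,t) = exp(iωt/α) · (c₁·log(tanh(η/2)) + c₂)^(1/n) (real power of the real factor, multiplied by the complex exponential). Then for every η > 0 and every t ∈ ℝ with c₁·log(tanh(η/2)) + c₂ > 0, u satisfies the nonlinear equation ∂u/∂t (η,t) − (iω/α)·u(η,t) = (1/sinh η)·∂/∂η[ sinh η · ∂/∂η ( u(η,t)ⁿ ) ], where u(η,t)ⁿ denotes the n-th power of u taken before differentiating in η. In particular, this solution is completely periodic in time with separated variables. -/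
/-- The completely periodic separated-variables function
`u(η,t) = exp(iωt/α)·(c₁ log(tanh(η/2)) + c₂)^(1/n)` solves the nonlinear
equation `∂ₜu - (iω/α)u = Δ_H(uⁿ)` for `η > 0` where the radicand is
positive. -/
theorem stmt_7 (n : ℕ) (hn : 2 ≤ n) (ω α : ℝ) (hα : α ≠ 0) (c₁ c₂ : ℝ)
    (u : ℝ → ℝ → ℂ)
    (hu : ∀ η t : ℝ, u η t =
      Complex.exp (Complex.I * ω * t / α) *
        ((c₁ * Real.log (Real.tanh (η / 2)) + c₂) ^ ((1 : ℝ) / n) : ℝ)) :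
    ∀ η t : ℝ, 0 < η → 0 < c₁ * Real.log (Real.tanh (η / 2)) + c₂ →
      deriv (fun s : ℝ => u η s) t - (Complex.I * ω / α) * u η t =
        (1 / (Real.sinh η : ℂ)) *
          deriv (fun s : ℝ => (Real.sinh s : ℂ) * deriv (fun r : ℝ => (u r t) ^ n) s) η := by
  intro η t hη hf
  have hn0 : (n : ℝ) ≠ 0 := by positivity
  set f : ℝ → ℝ := fun r => c₁ * Real.log (Real.tanh (r / 2)) + c₂ with hfdef
  -- derivative of f at positive points
  have hfd : ∀ s : ℝ, 0 < s → HasDerivAt f (c₁ / Real.sinh s) s := by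
    intro s hs
    have hc : Real.cosh (s / 2) ≠ 0 := ne_of_gt (Real.cosh_pos _)
    have hsh : 0 < Real.sinh (s / 2) := Real.sinh_pos_iff.mpr (by linarith)
    have htanh : 0 < Real.tanh (s / 2) := by
      rw [Real.tanh_eq_sinh_div_cosh]; positivity
    have hhalf : HasDerivAt (fun r : ℝ => r / 2) (1 / 2) s := (hasDerivAt_id s).div_const 2
    have h1 : HasDerivAt (fun r : ℝ => Real.tanh (r / 2))
        ((Real.cosh (s / 2) * Real.cosh (s / 2) -
          Real.sinh (s / 2) * Real.sinh (s / 2)) / (Real.cosh (s / 2)) ^ 2 * (1 / 2)) s := by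
      have h0 : HasDerivAt (fun x : ℝ => Real.sinh x / Real.cosh x)
          ((Real.cosh (s / 2) * Real.cosh (s / 2) -
            Real.sinh (s / 2) * Real.sinh (s / 2)) / (Real.cosh (s / 2)) ^ 2) (s / 2) :=
        (Real.hasDerivAt_sinh _).div (Real.hasDerivAt_cosh _) hc
      have := h0.comp s hhalf
      rw [show (fun r : ℝ => Real.tanh (r / 2)) = (fun x : ℝ => Real.sinh x / Real.cosh x) ∘ fun r : ℝ => r / 2 from
        funext fun r => by simp [Real.tanh_eq_sinh_div_cosh]]
      exact this
    have h2 := ((h1.log (ne_of_gt htanh)).const_mul c₁).add_const c₂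
    have hsinh : Real.sinh s = 2 * Real.sinh (s / 2) * Real.cosh (s / 2) := by
      rw [← Real.sinh_two_mul]; ring_nf
    have hone : Real.cosh (s / 2) * Real.cosh (s / 2) -
        Real.sinh (s / 2) * Real.sinh (s / 2) = 1 := by
      have := Real.cosh_sq_sub_sinh_sq (s / 2); nlinarith [this]
    have key : c₁ * ((Real.cosh (s / 2) * Real.cosh (s / 2) -
        Real.sinh (s / 2) * Real.sinh (s / 2)) / (Real.cosh (s / 2)) ^ 2 * (1 / 2) /
          Real.tanh (s / 2)) = c₁ / Real.sinh s := by
      rw [hone, Real.tanh_eq_sinh_div_cosh, hsinh]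
      field_simp
    rw [key] at h2
    exact h2
  set A : ℂ := Complex.exp (Complex.I * ω * t / α) ^ n with hA
  -- eventual positivity
  have hevP : ∀ s : ℝ, 0 < s → 0 < f s → ∀ᶠ r in nhds s, 0 < r ∧ 0 < f r := by
    intro s hs hfs
    exact (eventually_gt_nhds hs).and
      ((hfd s hs).continuousAt.eventually_mem (isOpen_Ioi.mem_nhds hfs))
  -- power of u
  have hpow : ∀ r : ℝ, 0 < r → 0 < f r → u r t ^ n = A * ((f r : ℝ) : ℂ) := by
    intro r hr hfr
    rw [hu r t, mul_pow]
    congr 1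
    rw [← Complex.ofReal_pow, ← Real.rpow_natCast (f r ^ ((1 : ℝ) / n)) n,
      ← Real.rpow_mul hfr.le]
    rw [one_div, inv_mul_cancel₀ hn0, Real.rpow_one]
  -- derivative of uⁿ in η
  have hder : ∀ s : ℝ, 0 < s → 0 < f s →
      deriv (fun r : ℝ => u r t ^ n) s = A * ((c₁ / Real.sinh s : ℝ) : ℂ) := by
    intro s hs hfs
    have hg : HasDerivAt (fun r : ℝ => A * ((f r : ℝ) : ℂ))
        (A * ((c₁ / Real.sinh s : ℝ) : ℂ)) s := ((hfd s hs).ofReal_comp).const_mul A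
    have heq : (fun r : ℝ => u r t ^ n) =ᶠ[nhds s] fun r => A * ((f r : ℝ) : ℂ) := by
      filter_upwards [hevP s hs hfs] with r hr
      exact hpow r hr.1 hr.2
    exact (hg.congr_of_eventuallyEq heq).deriv
  -- the inner function is eventually constant near η
  have hconst : (fun s : ℝ => (Real.sinh s : ℂ) * deriv (fun r : ℝ => u r t ^ n) s)
      =ᶠ[nhds η] fun _ => A * (c₁ : ℂ) := by
    filter_upwards [hevP η hη hf] with s hs
    rw [hder s hs.1 hs.2]
    have hsinh : (Real.sinh s : ℂ) ≠ 0 :=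
      Complex.ofReal_ne_zero.mpr (Real.sinh_pos_iff.mpr hs.1).ne'
    rw [Complex.ofReal_div]
    field_simp
  have hderiv0 : deriv (fun s : ℝ => (Real.sinh s : ℂ) *
      deriv (fun r : ℝ => u r t ^ n) s) η = 0 := by
    rw [hconst.deriv_eq, deriv_const]
  -- time derivative
  have hfun : (fun s : ℝ => u η s) =
      fun s : ℝ => Complex.exp (Complex.I * ω * s / α) * ((f η ^ ((1 : ℝ) / n) : ℝ) : ℂ) :=
    funext fun s => hu η s
  have hexp : HasDerivAt (fun s : ℝ => Complex.exp (Complex.I * ω * s / α) *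
      ((f η ^ ((1 : ℝ) / n) : ℝ) : ℂ))
      (Complex.exp (Complex.I * ω * t / α) * (Complex.I * ω * 1 / α) *
        ((f η ^ ((1 : ℝ) / n) : ℝ) : ℂ)) t := by
    have h0 : HasDerivAt (fun s : ℝ => ((s : ℝ) : ℂ)) 1 t := by
      simpa using (hasDerivAt_id t).ofReal_comp
    have h1 := ((h0.const_mul (Complex.I * ω)).div_const (α : ℂ)).cexp
    exact h1.mul_const _
  have hld : deriv (fun s : ℝ => u η s) t =
      Complex.exp (Complex.I * ω * t / α) * (Complex.I * ω * 1 / α) *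
        ((f η ^ ((1 : ℝ) / n) : ℝ) : ℂ) := by
    rw [hfun]; exact hexp.deriv
  rw [hld, hderiv0, hu η t]
  ring
end

section
/- Let f₁, f₂, f₃ : ℝ → ℝ be differentiable functions satisfying the system of ordinary differential equations f₁'(t) = f₁(t)², f₂'(t) = f₁(t)·f₂(t) and f₃'(t) = f₁(t)·f₃(t) for all t. Define u(η,t) = f₁(t)·log(sinh η) + f₂(t)·log(tanh(η/2)) + f₃(t). Then for every η > 0 and every t ∈ ℝ, u satisfies the nonlinear diffusion equation ∂u/∂t (η,t) = (u(η,t)/sinh η) · ∂/∂η[ sinh η · ∂u/∂η (η,t) ]. -/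
open Real Filter

lemma hasDerivAt_logsinh {s : ℝ} (hs : 0 < s) :
    HasDerivAt (fun r : ℝ => Real.log (Real.sinh r)) (Real.cosh s / Real.sinh s) s :=
  (Real.hasDerivAt_sinh s).log (ne_of_gt (Real.sinh_pos_iff.2 hs))

lemma hasDerivAt_logtanh {s : ℝ} (hs : 0 < s) :
    HasDerivAt (fun r : ℝ => Real.log (Real.tanh (r / 2))) (1 / Real.sinh s) s := by
  have hsh : Real.sinh (s / 2) > 0 := Real.sinh_pos_iff.2 (by linarith)
  have hch : ∀ x : ℝ, Real.cosh x > 0 := fun x => Real.cosh_pos x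
  have h1 : HasDerivAt (fun r : ℝ => Real.log (Real.sinh (r / 2)))
      (Real.cosh (s / 2) / Real.sinh (s / 2) * (1 / 2)) s := by
    have := (hasDerivAt_logsinh (s := s / 2) (by linarith)).comp s
      ((hasDerivAt_id s).div_const 2)
    simpa [Function.comp_def] using this
  have h2 : HasDerivAt (fun r : ℝ => Real.log (Real.cosh (r / 2)))
      (Real.sinh (s / 2) / Real.cosh (s / 2) * (1 / 2)) s := by
    have hc : HasDerivAt (fun r : ℝ => Real.log (Real.cosh r))
        (Real.sinh (s / 2) / Real.cosh (s / 2)) (s / 2) :=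
      (Real.hasDerivAt_cosh (s / 2)).log (ne_of_gt (hch (s/2)))
    have := hc.comp s ((hasDerivAt_id s).div_const 2)
    simpa [Function.comp_def] using this
  have key : HasDerivAt (fun r : ℝ => Real.log (Real.sinh (r / 2)) - Real.log (Real.cosh (r / 2)))
      (1 / Real.sinh s) s := by
    have h := h1.sub h2
    refine h.congr_deriv ?_; symm
    have hsinh : Real.sinh s = 2 * Real.sinh (s / 2) * Real.cosh (s / 2) := by
      have := Real.sinh_two_mul (s / 2)
      rw [show 2 * (s / 2) = s by ring] at this
      linarith [this]
    have hsq : Real.cosh (s / 2) ^ 2 - Real.sinh (s / 2) ^ 2 = 1 := by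
      have := Real.cosh_sq_sub_sinh_sq (s / 2); linarith
    rw [hsinh]
    have h1 : Real.sinh (s/2) ≠ 0 := ne_of_gt hsh
    have h2 : Real.cosh (s/2) ≠ 0 := ne_of_gt (hch (s/2))
    field_simp
    linear_combination -hsq
  apply key.congr_of_eventuallyEq
  have : ∀ᶠ r in nhds s, 0 < r := eventually_gt_nhds hs
  filter_upwards [this] with r hr
  rw [Real.tanh_eq_sinh_div_cosh,
    Real.log_div (ne_of_gt (Real.sinh_pos_iff.2 (by linarith))) (ne_of_gt (Real.cosh_pos (r/2)))]

/-- If `f₁' = f₁²`, `f₂' = f₁f₂`, `f₃' = f₁f₃`, then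
`u(η,t) = f₁(t)log(sinh η) + f₂(t)log(tanh(η/2)) + f₃(t)` solves
`∂ₜu = u·Δ_H u` for `η > 0`. -/
theorem stmt_10 (f₁ f₂ f₃ : ℝ → ℝ)
    (hf₁ : Differentiable ℝ f₁) (hf₂ : Differentiable ℝ f₂)
    (hf₃ : Differentiable ℝ f₃)
    (hf₁' : ∀ t : ℝ, deriv f₁ t = (f₁ t) ^ 2)
    (hf₂' : ∀ t : ℝ, deriv f₂ t = f₁ t * f₂ t)
    (hf₃' : ∀ t : ℝ, deriv f₃ t = f₁ t * f₃ t)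
    (u : ℝ → ℝ → ℝ)
    (hu : ∀ η t : ℝ, u η t =
      f₁ t * Real.log (Real.sinh η) + f₂ t * Real.log (Real.tanh (η / 2)) + f₃ t) :
    ∀ η t : ℝ, 0 < η →
      deriv (fun s : ℝ => u η s) t =
        (u η t / Real.sinh η) *
          deriv (fun s : ℝ => Real.sinh s * deriv (fun r : ℝ => u r t) s) η := by
  intro η t hη
  have hsη : Real.sinh η ≠ 0 := ne_of_gt (Real.sinh_pos_iff.2 hη)
  -- time derivative
  have hLHS : deriv (fun s : ℝ => u η s) t = f₁ t * u η t := by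
    have heq : (fun s : ℝ => u η s) =
        fun s => f₁ s * Real.log (Real.sinh η) + f₂ s * Real.log (Real.tanh (η / 2)) + f₃ s := by
      funext s; exact hu η s
    rw [heq]
    have h1 := ((hf₁ t).hasDerivAt.mul_const (Real.log (Real.sinh η)))
    have h2 := ((hf₂ t).hasDerivAt.mul_const (Real.log (Real.tanh (η / 2))))
    have h := (h1.add h2).add (hf₃ t).hasDerivAt
    rw [(show HasDerivAt (fun s => f₁ s * Real.log (Real.sinh η) + f₂ s * Real.log (Real.tanh (η / 2)) + f₃ s) _ t from h).deriv, hf₁' t, hf₂' t, hf₃' t, hu η t]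
    ring
  -- spatial derivative: for s > 0
  have hspace : ∀ s : ℝ, 0 < s → HasDerivAt (fun r : ℝ => u r t)
      (f₁ t * (Real.cosh s / Real.sinh s) + f₂ t * (1 / Real.sinh s)) s := by
    intro s hs
    have heq : (fun r : ℝ => u r t) =
        fun r => f₁ t * Real.log (Real.sinh r) + f₂ t * Real.log (Real.tanh (r / 2)) + f₃ t := by
      funext r; exact hu r t
    rw [heq]
    exact (((hasDerivAt_logsinh hs).const_mul (f₁ t)).add
      ((hasDerivAt_logtanh hs).const_mul (f₂ t))).add_const (f₃ t)
  -- the flux sinh s * ∂u/∂η equals f₁ t * cosh s + f₂ t for s > 0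
  have hflux : (fun s : ℝ => Real.sinh s * deriv (fun r : ℝ => u r t) s)
      =ᶠ[nhds η] (fun s : ℝ => f₁ t * Real.cosh s + f₂ t) := by
    filter_upwards [eventually_gt_nhds hη] with s hs
    show Real.sinh s * deriv (fun r : ℝ => u r t) s = _
    rw [(hspace s hs).deriv]
    have : Real.sinh s ≠ 0 := ne_of_gt (Real.sinh_pos_iff.2 hs)
    field_simp
  have hRHS : deriv (fun s : ℝ => Real.sinh s * deriv (fun r : ℝ => u r t) s) η
      = f₁ t * Real.sinh η := by
    rw [hflux.deriv_eq]
    have h := ((Real.hasDerivAt_cosh η).const_mul (f₁ t)).add_const (f₂ t)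
    exact h.deriv
  rw [hLHS, hRHS]
  field_simp
end

section
/- Let t₀, c₁, c₂ be real constants. Define u(η,t) = [ log(sinh η) + c₁·log(tanh(η/2)) + c₂ ] / (t₀ − t). Then for every η > 0 and every real t ≠ t₀, u satisfies the classical nonlinear diffusion equation ∂u/∂t (η,t) = (u(η,t)/sinh η) · ∂/∂η[ sinh η · ∂u/∂η (η,t) ]. -/
open Real

private lemma hF_deriv (c₁ c₂ : ℝ) {x : ℝ} (hx : 0 < x) :
    HasDerivAt (fun y : ℝ => Real.log (Real.sinh y) + c₁ * Real.log (Real.tanh (y / 2)) + c₂)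
      ((Real.cosh x + c₁) / Real.sinh x) x := by
  have hs : 0 < Real.sinh x := Real.sinh_pos_iff.mpr hx
  have hs2 : 0 < Real.sinh (x / 2) := Real.sinh_pos_iff.mpr (by linarith)
  have hc2 : 0 < Real.cosh (x / 2) := Real.cosh_pos _
  -- rewrite log(tanh) as log sinh - log cosh near x
  have heq : (fun y : ℝ => Real.log (Real.sinh y) + c₁ * Real.log (Real.tanh (y / 2)) + c₂)
      =ᶠ[nhds x] (fun y : ℝ =>
        Real.log (Real.sinh y) + c₁ * (Real.log (Real.sinh (y / 2)) - Real.log (Real.cosh (y / 2))) + c₂) := by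
    filter_upwards [isOpen_Ioi.mem_nhds (Set.mem_Ioi.mpr hx)] with y hy
    have hsy : 0 < Real.sinh (y / 2) := Real.sinh_pos_iff.mpr (by simpa using by linarith [Set.mem_Ioi.mp hy] : (0:ℝ) < y / 2)
    rw [Real.tanh_eq_sinh_div_cosh, Real.log_div hsy.ne' (Real.cosh_pos _).ne']
  have h1 : HasDerivAt (fun y : ℝ => Real.log (Real.sinh y)) (Real.cosh x / Real.sinh x) x :=
    (Real.hasDerivAt_sinh x).log hs.ne'
  have hhalf : HasDerivAt (fun y : ℝ => y / 2) (1 / 2 : ℝ) x := by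
    simpa using (hasDerivAt_id x).div_const 2
  have hc1 : HasDerivAt (fun y : ℝ => Real.sinh (y / 2)) (Real.cosh (x / 2) * (1 / 2)) x :=
    by have := (Real.hasDerivAt_sinh (x / 2)).comp x hhalf; exact this
  have hc2' : HasDerivAt (fun y : ℝ => Real.cosh (y / 2)) (Real.sinh (x / 2) * (1 / 2)) x :=
    by have := (Real.hasDerivAt_cosh (x / 2)).comp x hhalf; exact this
  have h2 : HasDerivAt (fun y : ℝ => Real.log (Real.sinh (y / 2)))
      (Real.cosh (x / 2) / Real.sinh (x / 2) * (1 / 2)) x := by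
    have := hc1.log hs2.ne'
    convert this using 1; ring
  have h3 : HasDerivAt (fun y : ℝ => Real.log (Real.cosh (y / 2)))
      (Real.sinh (x / 2) / Real.cosh (x / 2) * (1 / 2)) x := by
    have := hc2'.log hc2.ne'
    convert this using 1; ring
  have hmain : HasDerivAt (fun y : ℝ =>
      Real.log (Real.sinh y) + c₁ * (Real.log (Real.sinh (y / 2)) - Real.log (Real.cosh (y / 2))) + c₂)
      (Real.cosh x / Real.sinh x +
        c₁ * (Real.cosh (x / 2) / Real.sinh (x / 2) * (1 / 2) -
          Real.sinh (x / 2) / Real.cosh (x / 2) * (1 / 2))) x :=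
    ((h1.add ((h2.sub h3).const_mul c₁)).add_const c₂)
  have hval : Real.cosh x / Real.sinh x +
      c₁ * (Real.cosh (x / 2) / Real.sinh (x / 2) * (1 / 2) -
        Real.sinh (x / 2) / Real.cosh (x / 2) * (1 / 2)) = (Real.cosh x + c₁) / Real.sinh x := by
    have hsinh : Real.sinh x = 2 * Real.sinh (x / 2) * Real.cosh (x / 2) := by
      rw [← Real.sinh_two_mul]; ring_nf
    have hid : Real.cosh (x / 2) ^ 2 - Real.sinh (x / 2) ^ 2 = 1 := Real.cosh_sq_sub_sinh_sq _
    have hcsub : Real.cosh (x / 2) / Real.sinh (x / 2) * (1 / 2) -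
        Real.sinh (x / 2) / Real.cosh (x / 2) * (1 / 2) = 1 / Real.sinh x := by
      rw [hsinh]
      field_simp
      linear_combination hid
    rw [hcsub]
    field_simp
  exact (hmain.congr_deriv hval).congr_of_eventuallyEq heq

/-- `u(η,t) = (log(sinh η) + c₁ log(tanh(η/2)) + c₂)/(t₀ - t)` solves
`∂ₜu = u·Δ_H u` for `η > 0` and `t ≠ t₀`. -/
theorem stmt_11 (t₀ c₁ c₂ : ℝ)
    (u : ℝ → ℝ → ℝ)
    (hu : ∀ η t : ℝ, u η t =
      (Real.log (Real.sinh η) + c₁ * Real.log (Real.tanh (η / 2)) + c₂) / (t₀ - t)) :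
    ∀ η t : ℝ, 0 < η → t ≠ t₀ →
      deriv (fun s : ℝ => u η s) t =
        (u η t / Real.sinh η) *
          deriv (fun s : ℝ => Real.sinh s * deriv (fun r : ℝ => u r t) s) η := by
  intro η t hη ht
  have hts : t₀ - t ≠ 0 := sub_ne_zero.mpr (Ne.symm ht)
  set F : ℝ → ℝ := fun y => Real.log (Real.sinh y) + c₁ * Real.log (Real.tanh (y / 2)) + c₂ with hF
  have hsη : 0 < Real.sinh η := Real.sinh_pos_iff.mpr hη
  -- time derivative
  have htime : HasDerivAt (fun s : ℝ => u η s) (F η / (t₀ - t) ^ 2) t := by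
    have h1 : HasDerivAt (fun s : ℝ => t₀ - s) (-1 : ℝ) t := by
      simpa using (hasDerivAt_id t).const_sub t₀
    have h2 : HasDerivAt (fun s : ℝ => F η / (t₀ - s))
        ((0 * (t₀ - t) - F η * -1) / (t₀ - t) ^ 2) t := (hasDerivAt_const t (F η)).div h1 hts
    have : HasDerivAt (fun s : ℝ => u η s) ((0 * (t₀ - t) - F η * -1) / (t₀ - t) ^ 2) t := by
      refine h2.congr_of_eventuallyEq ?_
      filter_upwards with s using (hu η s)
    simpa using this.congr_deriv (by ring)
  -- spatial derivative: on Ioi 0, deriv (u · t) = (cosh+c₁)/sinh /(t₀-t)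
  have hspace : ∀ x : ℝ, 0 < x → deriv (fun r : ℝ => u r t) x
      = (Real.cosh x + c₁) / Real.sinh x / (t₀ - t) := by
    intro x hx
    have h1 : HasDerivAt (fun r : ℝ => u r t)
        ((Real.cosh x + c₁) / Real.sinh x / (t₀ - t)) x := by
      have := (hF_deriv c₁ c₂ hx).div_const (t₀ - t)
      refine this.congr_of_eventuallyEq ?_
      filter_upwards with r using (hu r t)
    exact h1.deriv
  -- inner function equals (cosh s + c₁)/(t₀-t) on Ioi 0
  have hinner : (fun s : ℝ => Real.sinh s * deriv (fun r : ℝ => u r t) s)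
      =ᶠ[nhds η] (fun s : ℝ => (Real.cosh s + c₁) / (t₀ - t)) := by
    filter_upwards [isOpen_Ioi.mem_nhds (Set.mem_Ioi.mpr hη)] with s hs
    have hss : Real.sinh s ≠ 0 := (Real.sinh_pos_iff.mpr (Set.mem_Ioi.mp hs)).ne'
    rw [hspace s (Set.mem_Ioi.mp hs)]
    field_simp
  have houter : deriv (fun s : ℝ => Real.sinh s * deriv (fun r : ℝ => u r t) s) η
      = Real.sinh η / (t₀ - t) := by
    rw [hinner.deriv_eq]
    exact (((Real.hasDerivAt_cosh η).add_const c₁).div_const (t₀ - t)).deriv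
  rw [htime.deriv, houter, hu η t]
  field_simp
  ring
end
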